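/- Assume weak projectability holds for the predicate G. Let D := F_1 ∧ ... ∧ F_k ∧ ¬F_{k+1} ∧ ... ∧ ¬F_N, with 1 ≤ k ≤ N, and assume D does not entail G_k (i.e., 0 < pr(G_k | D) < 1). Then pr(H | G_k ∧ D) > pr(H | D), where H := ∀b (F_b → G_b). That is, observing that a known F-object is G strictly confirms the hypothesis that all F are G. -/

import Mathlib

open MeasureTheory ProbabilityTheory

/-- Complete description vectors: each individual is assigned whether it is `F`
(first component) and whether it is `G` (second component). -/
abbrev CDV (N : ℕ) := Fin N → Bool × Bool

/-- The event that individual `b` satisfies `F`. -/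
def Fev {N : ℕ} (b : Fin N) : Set (CDV N) := {ω | (ω b).1 = true}

/-- The event that individual `b` satisfies `G`. -/
def Gev {N : ℕ} (b : Fin N) : Set (CDV N) := {ω | (ω b).2 = true}

/-- The hypothesis `H`: every individual satisfying `F` also satisfies `G`. -/
def Hyp (N : ℕ) : Set (CDV N) := {ω | ∀ b : Fin N, (ω b).1 = true → (ω b).2 = true}

/-- The twelve single-individual predicates allowed in the class `Δ`
(`F`, `¬F`, `G`, `¬G`, the complete descriptions `F̄Ḡ`, `F̄G`, `FḠ`, `FG`,
their relevant negations including `F→G = ¬FḠ`), together with the trivial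
predicate (for undescribed individuals). -/
def allowedPreds : Set (Set (Bool × Bool)) :=
  { Set.univ,
    {p | p.1 = true}, {p | p.1 = false},
    {p | p.2 = true}, {p | p.2 = false},
    {p | p.1 = false ∧ p.2 = false}, {p | ¬(p.1 = false ∧ p.2 = false)},
    {p | p.1 = false ∧ p.2 = true}, {p | ¬(p.1 = false ∧ p.2 = true)},
    {p | p.1 = true ∧ p.2 = false},
    {p | p.1 = true → p.2 = true},
    {p | p.1 = true ∧ p.2 = true}, {p | ¬(p.1 = true ∧ p.2 = true)} }

/-- The class `Δ` of admissible backgrounds: conjunctions of allowed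
single-individual predicates, each about a distinct individual
(hence not linking properties of distinct individuals). -/
def IsDelta {N : ℕ} (D : Set (CDV N)) : Prop :=
  ∃ A : Fin N → Set (Bool × Bool),
    (∀ b, A b ∈ allowedPreds) ∧ D = {ω | ∀ b, ω b ∈ A b}

/-- Under weak projectability for `G`, with background
`D := F_1 ∧ ... ∧ F_k ∧ ¬F_{k+1} ∧ ... ∧ ¬F_N` (1 ≤ k ≤ N) not determining `G_k`,
the evidence `G_k` strictly confirms `H`. -/
theorem confirmation_by_Gk {N k : ℕ} (hk1 : 1 ≤ k) (hk2 : k ≤ N)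
    (μ : Measure (CDV N)) [IsProbabilityMeasure μ]
    -- weak projectability (PJ) for the predicate G
    (hPJ : ∀ (a b : Fin N) (B : Set (CDV N)), IsDelta B → μ B ≠ 0 → μ (Gev a ∩ B) ≠ 0 →
      μ[Gev b | Gev a ∩ B] ≥ μ[Gev b | B])
    -- Cournot's principle: contingent events have positive probability
    (hCournot : ∀ s : Set (CDV N), s.Nonempty → μ s ≠ 0)
    (D : Set (CDV N)) (hD : D = {ω | ∀ b : Fin N, ((ω b).1 = true ↔ (b : ℕ) < k)})
    (i : Fin N) (hi : (i : ℕ) = k - 1)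
    -- D does not entail G_k
    (hnd : 0 < μ[Gev i | D] ∧ μ[Gev i | D] < 1) :
    μ[Hyp N | Gev i ∩ D] > μ[Hyp N | D] := by
  classical
  have hmeas : ∀ s : Set (CDV N), MeasurableSet s := fun s => (Set.toFinite s).measurableSet
  have hik : (i : ℕ) < k := by
    rw [hi]; exact Nat.sub_lt hk1 one_pos
  -- every ω in D has F_i
  have hiF : ∀ ω ∈ D, (ω i).1 = true := by
    intro ω hω; rw [hD] at hω; exact (hω i).2 hik
  have hsub : Hyp N ∩ D ⊆ Gev i := fun ω ⟨hH, hDω⟩ => hH i (hiF ω hDω)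
  -- H ∩ D is nonempty
  have hne : (Hyp N ∩ D).Nonempty := by
    refine ⟨fun b => (decide ((b : ℕ) < k), true), ?_, ?_⟩
    · intro b _; rfl
    · rw [hD]; intro b; simp [decide_eq_true_iff]
  have hm0 : μ (Hyp N ∩ D) ≠ 0 := hCournot _ hne
  have hD0 : μ D ≠ 0 := hCournot D ⟨_, hne.choose_spec.2⟩
  have hDfin : μ D ≠ ⊤ := measure_ne_top μ D
  have hcond := hnd
  rw [cond_apply (hmeas D)] at hcond
  have hGD0 : μ (D ∩ Gev i) ≠ 0 := by
    intro h; rw [h, mul_zero] at hcond; exact lt_irrefl _ hcond.1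
  have hGDlt : μ (D ∩ Gev i) < μ D := by
    rcases lt_or_eq_of_le (measure_mono (μ := μ) (Set.inter_subset_left (s := D) (t := Gev i))) with h | h
    · exact h
    · exfalso
      rw [h, ENNReal.inv_mul_cancel hD0 hDfin] at hcond
      exact lt_irrefl _ hcond.2
  have hkey : (Gev i ∩ D) ∩ Hyp N = Hyp N ∩ D := by
    ext ω
    constructor
    · rintro ⟨⟨_, hd⟩, hh⟩; exact ⟨hh, hd⟩
    · rintro ⟨hh, hd⟩; exact ⟨⟨hsub ⟨hh, hd⟩, hd⟩, hh⟩
  rw [cond_apply (hmeas D), cond_apply (hmeas (Gev i ∩ D)), hkey,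
    Set.inter_comm D (Hyp N)]
  have hmfin : μ (Hyp N ∩ D) ≠ ⊤ := measure_ne_top _ _
  rw [Set.inter_comm (Gev i) D]
  have hinv : (μ D)⁻¹ < (μ (D ∩ Gev i))⁻¹ := ENNReal.inv_lt_inv.mpr hGDlt
  rw [mul_comm _ (μ (Hyp N ∩ D)), mul_comm _ (μ (Hyp N ∩ D))]
  exact ENNReal.mul_lt_mul_right hm0 hmfin hinv
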